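/- arXiv:2104.06809 — 2 statements merged into one kernel-verified Lean document; each statement's English description precedes it below -/
import Mathlib

section
/- Let T(D) = Σ_{j=-μ}^{μ} T_j D^j be an n×n Laurent polynomial matrix over F. Suppose the sets of indices of nonzero columns of the coefficient matrices T_j (for j = -μ,...,μ) form a partition of {1,...,n}, and let d_j denote the number of nonzero columns of T_j. If det(T(D)) is a nonzero constant in F, then μ·d_{-μ} + ... + 2·d_{-2} + d_{-1} = d_1 + 2·d_2 + ... + μ·d_μ. -/
open LaurentPolynomial Classical

private lemma T_prod {F : Type*} [Field F] {ι : Type*} (s : Finset ι) (f : ι → ℤ) :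
    (∏ b ∈ s, (T (f b) : F[T;T⁻¹])) = T (∑ b ∈ s, f b) := by
  classical
  induction s using Finset.induction with
  | empty => simp [T_zero]
  | insert _ _ h ih => rw [Finset.prod_insert h, Finset.sum_insert h, ih, T_add]

/-- for `T(D) = Σ_{j=-μ}^{μ} T_j D^j` whose coefficient matrices have
nonzero-column index sets forming a partition of `{1,…,n}`, with `d_j` the number of
nonzero columns of `T_j`, if `det T(D)` is a nonzero constant then
`μ d_{-μ} + ⋯ + d_{-1} = d_1 + ⋯ + μ d_μ`. -/
theorem stmt9 {F : Type*} [Field F] {n μ : ℕ} (hn : 1 ≤ n) (hμ : 1 ≤ μ)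
    (Tc : ℤ → Matrix (Fin n) (Fin n) F)
    (hsupp : ∀ j : ℤ, j ∉ Finset.Icc (-(μ : ℤ)) (μ : ℤ) → Tc j = 0)
    (hpart : ∀ i : Fin n, ∃! j : ℤ,
      j ∈ Finset.Icc (-(μ : ℤ)) (μ : ℤ) ∧ ∃ a : Fin n, Tc j a i ≠ 0)
    (d : ℤ → ℕ)
    (hd : ∀ j : ℤ, d j = (Finset.univ.filter fun i : Fin n => ∃ a, Tc j a i ≠ 0).card)
    (hdet : ∃ c : F, c ≠ 0 ∧
      (Matrix.det fun a b : Fin n =>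
        ∑ j ∈ Finset.Icc (-(μ : ℤ)) (μ : ℤ), C (Tc j a b) * T j) = C c) :
    (∑ j ∈ Finset.Icc (1 : ℤ) (μ : ℤ), j * d (-j)) =
      ∑ j ∈ Finset.Icc (1 : ℤ) (μ : ℤ), j * d j := by
  classical
  obtain ⟨c, hc, hdet⟩ := hdet
  -- the unique degree attached to each column
  set jf : Fin n → ℤ := fun i => (hpart i).choose with hjf
  have hjf_mem : ∀ i, jf i ∈ Finset.Icc (-(μ : ℤ)) (μ : ℤ) := fun i =>
    (hpart i).choose_spec.1.1
  have hjf_nz : ∀ i, ∃ a, Tc (jf i) a i ≠ 0 := fun i => (hpart i).choose_spec.1.2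
  have hjf_uniq : ∀ i j, j ∈ Finset.Icc (-(μ : ℤ)) (μ : ℤ) →
      (∃ a, Tc j a i ≠ 0) → j = jf i := fun i j h1 h2 =>
    (hpart i).choose_spec.2 j ⟨h1, h2⟩
  -- each column collapses to a single term
  have hcol : ∀ a b : Fin n,
      (∑ j ∈ Finset.Icc (-(μ : ℤ)) (μ : ℤ), C (Tc j a b) * T j)
        = T (jf b) * C (Tc (jf b) a b) := by
    intro a b
    rw [mul_comm]
    refine Finset.sum_eq_single_of_mem _ (hjf_mem b) ?_
    intro j hj hne
    have : Tc j a b = 0 := by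
      by_contra h
      exact hne (hjf_uniq b j hj ⟨a, h⟩)
    simp [this]
  -- rewrite the determinant
  set M : Matrix (Fin n) (Fin n) F := fun a b => Tc (jf b) a b with hM
  have hdet2 : (Matrix.det fun a b : Fin n =>
      ∑ j ∈ Finset.Icc (-(μ : ℤ)) (μ : ℤ), C (Tc j a b) * T j)
      = T (∑ b, jf b) * C M.det := by
    have h1 : (fun a b : Fin n =>
        ∑ j ∈ Finset.Icc (-(μ : ℤ)) (μ : ℤ), C (Tc j a b) * T j)
        = Matrix.of fun a b : Fin n => T (jf b) * ((C : F →+* F[T;T⁻¹]).mapMatrix M) a b := by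
      funext a b
      exact hcol a b
    rw [h1, Matrix.det_mul_row, T_prod, ← RingHom.map_det]
  rw [hdet2] at hdet
  -- detM ≠ 0
  have hMdet : M.det ≠ 0 := by
    intro h
    rw [h, map_zero, mul_zero] at hdet
    have h2 : (AddMonoidAlgebra.single (0:ℤ) c : F[T;T⁻¹]) = 0 := by
      rw [single_eq_C_mul_T, T_zero, mul_one, ← hdet]
    exact hc (AddMonoidAlgebra.single_eq_zero.mp h2)
  -- conclude the sum of degrees is zero
  have hS : (∑ b, jf b) = 0 := by
    have h1 : (AddMonoidAlgebra.single (∑ b, jf b) M.det : F[T;T⁻¹]) = AddMonoidAlgebra.single 0 c := by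
      rw [single_eq_C_mul_T, single_eq_C_mul_T, T_zero, mul_one, mul_comm]
      exact hdet
    rcases AddMonoidAlgebra.single_inj.mp h1 with ⟨h, _⟩ | ⟨h, _⟩
    · exact h
    · exact absurd h hMdet
  -- fibre cardinalities equal d j
  have hcard : ∀ j ∈ Finset.Icc (-(μ : ℤ)) (μ : ℤ),
      (Finset.univ.filter fun b : Fin n => jf b = j).card = d j := by
    intro j hj
    rw [hd]
    congr 1
    apply Finset.filter_congr
    intro b _
    constructor
    · rintro rfl; exact hjf_nz b
    · intro h; exact (hjf_uniq b j hj h).symm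
  -- sum of jf over all columns equals ∑ j * d j
  have hsum : (∑ b, jf b) = ∑ j ∈ Finset.Icc (-(μ : ℤ)) (μ : ℤ), j * d j := by
    rw [← Finset.sum_fiberwise_of_maps_to (fun b _ => hjf_mem b) jf]
    refine Finset.sum_congr rfl ?_
    intro j hj
    rw [Finset.sum_congr rfl (fun b hb => (Finset.mem_filter.mp hb).2),
      Finset.sum_const, ← hcard j hj]
    simp [mul_comm]
  have hzero : (∑ j ∈ Finset.Icc (-(μ : ℤ)) (μ : ℤ), j * d j) = 0 := by
    rw [← hsum, hS]
  -- split the sum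
  have hsplit : Finset.Icc (-(μ : ℤ)) (μ : ℤ)
      = Finset.Icc (-(μ : ℤ)) (-1) ∪ Finset.Icc (0 : ℤ) (μ : ℤ) := by
    ext j
    simp only [Finset.mem_Icc, Finset.mem_union]
    omega
  have hdisj : Disjoint (Finset.Icc (-(μ : ℤ)) (-1)) (Finset.Icc (0 : ℤ) (μ : ℤ)) := by
    rw [Finset.disjoint_left]
    intro j h1 h2
    simp only [Finset.mem_Icc] at h1 h2
    omega
  rw [hsplit, Finset.sum_union hdisj] at hzero
  have himg : Finset.Icc (-(μ : ℤ)) (-1) = (Finset.Icc (1 : ℤ) (μ : ℤ)).image (fun j => -j) := by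
    ext j
    simp only [Finset.mem_Icc, Finset.mem_image]
    constructor
    · intro h; exact ⟨-j, by omega, by omega⟩
    · rintro ⟨k, hk, rfl⟩; omega
  have hneg : (∑ j ∈ Finset.Icc (-(μ : ℤ)) (-1), j * d j)
      = -∑ j ∈ Finset.Icc (1 : ℤ) (μ : ℤ), j * d (-j) := by
    rw [himg, Finset.sum_image (by intro a _ b _ h; simpa using h)]
    rw [← Finset.sum_neg_distrib]
    refine Finset.sum_congr rfl ?_
    intro j _
    ring
  have h0μ : (∑ j ∈ Finset.Icc (0 : ℤ) (μ : ℤ), j * d j)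
      = ∑ j ∈ Finset.Icc (1 : ℤ) (μ : ℤ), j * d j := by
    have : Finset.Icc (0 : ℤ) (μ : ℤ) = insert 0 (Finset.Icc (1 : ℤ) (μ : ℤ)) := by
      ext j
      simp only [Finset.mem_Icc, Finset.mem_insert]
      omega
    rw [this, Finset.sum_insert (by simp)]
    simp
  rw [hneg, h0μ] at hzero
  omega
end

section
/- Suppose y(D) = u(D)G'(D) + e(D) where G'(D) = S(D) G T^{-1}(D) with T(D) an invertible Laurent polynomial matrix, S(D) a polynomial matrix with S_μ invertible, and G a generator matrix of a block code correcting t errors. If every coefficient of e(D)T(D) has weight ≤ t, then the decoder that (i) computes y(D)T(D) = u(D)S(D)G + e(D)T(D), (ii) decodes each coefficient with the block decoder to get the coefficients of u(D)S(D), and (iii) inverts S(D) recursively, recovers u(D) exactly. -/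
open Classical

/-- Hamming weight of a vector. -/
noncomputable def hwt {F : Type*} [Zero F] {n : ℕ} (v : Fin n → F) : ℕ :=
  (Finset.univ.filter fun i => v i ≠ 0).card

private lemma sum_vecMul'' {F : Type*} [Field F] {m n : ℕ} {ι : Type*} (s : Finset ι)
    (f : ι → (Fin m → F)) (A : Matrix (Fin m) (Fin n) F) :
    Matrix.vecMul (∑ i ∈ s, f i) A = ∑ i ∈ s, Matrix.vecMul (f i) A := by
  induction s using Finset.cons_induction with
  | empty => simp [Matrix.zero_vecMul]
  | cons a s ha ih => simp [Finset.sum_insert ha, Matrix.add_vecMul, ih]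

private lemma vecMul_sum'' {F : Type*} [Field F] {m n : ℕ} {ι : Type*} (s : Finset ι)
    (v : Fin m → F) (f : ι → Matrix (Fin m) (Fin n) F) :
    Matrix.vecMul v (∑ i ∈ s, f i) = ∑ i ∈ s, Matrix.vecMul v (f i) := by
  induction s using Finset.cons_induction with
  | empty => simp [Matrix.vecMul_zero]
  | cons a s ha ih => simp [Finset.sum_insert ha, Matrix.vecMul_add, ih]

/-- correctness of the decoder of the convolutional McEliece scheme.
`y(D) = u(D)G'(D) + e(D)` with `G'(D) = S(D) G T(D)⁻¹` (encoded by the coefficient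
identities below), `S_μ` invertible, `T(D)` invertible over Laurent polynomials, `G`
a generator matrix with decoder `Dec` correcting `t` errors, and every coefficient
of `e(D)T(D)` of weight at most `t`.  The decoder computes the coefficients of
`y(D)T(D)`, applies `Dec` to each to obtain the coefficients `û` of `u(D)S(D)`, and
recovers `u` by the recursion `ũ_i = (û_{μ+i} - Σ_{j<i} ũ_j S_{μ+i-j}) S_μ⁻¹`:
then `ũ_i = u_i` for all `i ≤ s`. -/
theorem stmt16 {F : Type*} [Field F] {k n t : ℕ} (μ : ℕ) (ν : ℤ) (hμν : (μ : ℤ) ≤ ν)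
    (G : Matrix (Fin k) (Fin n) F)
    (Dec : (Fin n → F) → (Fin k → F))
    (hDec : ∀ (v : Fin k → F) (w : Fin n → F),
      hwt w ≤ t → Dec (Matrix.vecMul v G + w) = v)
    (S : ℤ → Matrix (Fin k) (Fin k) F)
    (hSsupp : ∀ i : ℤ, i ∉ Finset.Icc (μ : ℤ) ν → S i = 0)
    (hSμ : IsUnit (S (μ : ℤ)).det)
    (Tc Pc : ℤ → Matrix (Fin n) (Fin n) F)
    (hTsupp : ∀ j : ℤ, j ∉ Finset.Icc (-(μ : ℤ)) (μ : ℤ) → Tc j = 0)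
    (hPsupp : ∃ N : Finset ℤ, ∀ j ∉ N, Pc j = 0)
    -- `T(D) P(D) = I`, coefficientwise
    (hTP : ∀ l : ℤ, (∑ j ∈ Finset.Icc (-(μ : ℤ)) (μ : ℤ), Tc j * Pc (l - j)) =
      if l = 0 then 1 else 0)
    -- `P(D) T(D) = I`, coefficientwise
    (hPT : ∀ l : ℤ, (∑ j ∈ Finset.Icc (-(μ : ℤ)) (μ : ℤ), Pc (l - j) * Tc j) =
      if l = 0 then 1 else 0)
    -- `G'(D) = S(D) G T(D)⁻¹ = S(D) G P(D)`, coefficientwise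
    (G' : ℤ → Matrix (Fin k) (Fin n) F)
    (hG' : ∀ l : ℤ, G' l = ∑ j ∈ Finset.Icc (μ : ℤ) ν, S j * G * Pc (l - j))
    (s : ℕ) (u : ℕ → Fin k → F) (hu : ∀ i : ℕ, s < i → u i = 0)
    (e : ℤ → Fin n → F)
    -- every coefficient of `e(D)T(D)` has weight at most `t`
    (herr : ∀ l : ℤ,
      hwt (∑ j ∈ Finset.Icc (-(μ : ℤ)) (μ : ℤ), Matrix.vecMul (e (l - j)) (Tc j)) ≤ t)
    -- the received sequence `y(D) = u(D)G'(D) + e(D)`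
    (y : ℤ → Fin n → F)
    (hy : ∀ l : ℤ,
      y l = (∑ i ∈ Finset.range (s + 1), Matrix.vecMul (u i) (G' (l - i))) + e l)
    -- step (i)+(ii): decode each coefficient of `y(D)T(D)`
    (uhat : ℤ → Fin k → F)
    (huhat : ∀ l : ℤ, uhat l =
      Dec (∑ j ∈ Finset.Icc (-(μ : ℤ)) (μ : ℤ), Matrix.vecMul (y (l - j)) (Tc j)))
    -- step (iii): invert `S(D)` recursively
    (util : ℕ → Fin k → F)
    (hutil : ∀ i : ℕ, util i =
      Matrix.vecMul
        (uhat ((μ : ℤ) + i) -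
          ∑ j ∈ Finset.range i, Matrix.vecMul (util j) (S ((μ : ℤ) + i - j)))
        (S (μ : ℤ))⁻¹) :
    ∀ i : ℕ, i ≤ s → util i = u i := by
  -- G'(D) T(D) = S(D) G, coefficientwise
  have hGT : ∀ m : ℤ,
      (∑ j ∈ Finset.Icc (-(μ : ℤ)) (μ : ℤ), G' (m - j) * Tc j) = S m * G := by
    intro m
    have expand : ∀ x : ℤ, G' (m - x) * Tc x
        = ∑ j' ∈ Finset.Icc (μ : ℤ) ν, S j' * G * (Pc (m - j' - x) * Tc x) := by
      intro x
      rw [hG', Matrix.sum_mul]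
      refine Finset.sum_congr rfl fun j' _ => ?_
      rw [show m - x - j' = m - j' - x by ring, Matrix.mul_assoc]
    rw [Finset.sum_congr rfl (fun x _ => expand x), Finset.sum_comm]
    have : ∀ j' ∈ Finset.Icc (μ : ℤ) ν,
        (∑ x ∈ Finset.Icc (-(μ : ℤ)) (μ : ℤ), S j' * G * (Pc (m - j' - x) * Tc x))
        = S j' * G * (∑ x ∈ Finset.Icc (-(μ : ℤ)) (μ : ℤ), Pc (m - j' - x) * Tc x) := by
      intro j' _
      rw [Matrix.mul_sum]
    rw [Finset.sum_congr rfl this]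
    have : ∀ j' ∈ Finset.Icc (μ : ℤ) ν,
        S j' * G * (∑ j ∈ Finset.Icc (-(μ : ℤ)) (μ : ℤ), Pc (m - j' - j) * Tc j)
        = if j' = m then S j' * G else 0 := by
      intro j' _
      rw [hPT (m - j')]
      by_cases h : j' = m
      · simp [h]
      · have : ¬ (m - j' = 0) := by omega
        simp [this, h]
    rw [Finset.sum_congr rfl this, Finset.sum_ite_eq' (Finset.Icc (μ : ℤ) ν) m
      (fun j' => S j' * G)]
    by_cases hm : m ∈ Finset.Icc (μ : ℤ) ν
    · simp [hm]
    · simp [hm, hSsupp m hm]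
  -- uhat formula
  have key : ∀ l : ℤ, uhat l = ∑ i ∈ Finset.range (s + 1),
      Matrix.vecMul (u i) (S (l - i)) := by
    intro l
    rw [huhat]
    have harg : (∑ j ∈ Finset.Icc (-(μ : ℤ)) (μ : ℤ), Matrix.vecMul (y (l - j)) (Tc j))
        = Matrix.vecMul (∑ i ∈ Finset.range (s + 1), Matrix.vecMul (u i) (S (l - i))) G
          + ∑ j ∈ Finset.Icc (-(μ : ℤ)) (μ : ℤ), Matrix.vecMul (e (l - j)) (Tc j) := by
      have step1 : ∀ j : ℤ, Matrix.vecMul (y (l - j)) (Tc j)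
          = (∑ i ∈ Finset.range (s + 1),
              Matrix.vecMul (u i) (G' (l - i - j) * Tc j))
            + Matrix.vecMul (e (l - j)) (Tc j) := by
        intro j
        rw [hy (l - j), Matrix.add_vecMul, sum_vecMul'']
        congr 1
        refine Finset.sum_congr rfl fun i _ => ?_
        rw [← Matrix.vecMul_vecMul]
        congr 2
        ring_nf
      rw [Finset.sum_congr rfl fun j _ => step1 j, Finset.sum_add_distrib]
      congr 1
      rw [Finset.sum_comm, sum_vecMul'']
      refine Finset.sum_congr rfl fun i _ => ?_
      rw [Matrix.vecMul_vecMul, ← hGT (l - (i : ℤ)), vecMul_sum'']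
    rw [harg, hDec _ _ (herr l)]
  -- truncated uhat formula
  have key2 : ∀ i : ℕ, i ≤ s → uhat ((μ : ℤ) + i) =
      (∑ j ∈ Finset.range i, Matrix.vecMul (u j) (S ((μ : ℤ) + i - j)))
        + Matrix.vecMul (u i) (S (μ : ℤ)) := by
    intro i hi
    rw [key]
    rw [← Finset.sum_subset (Finset.range_subset_range.mpr (by omega : i + 1 ≤ s + 1))
      (fun x _ hx => ?_)]
    · rw [Finset.sum_range_succ]
      congr 2
      push_cast; ring
    · have hxi : i < x := by simpa using hx
      have : ((μ : ℤ) + i - x) ∉ Finset.Icc (μ : ℤ) ν := by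
        simp only [Finset.mem_Icc, not_and_or]
        left; omega
      rw [hSsupp _ this, Matrix.vecMul_zero]
  intro i
  induction i using Nat.strong_induction_on with
  | _ i ih =>
    intro hi
    have hsum : (∑ j ∈ Finset.range i, Matrix.vecMul (util j) (S ((μ : ℤ) + i - j)))
        = ∑ j ∈ Finset.range i, Matrix.vecMul (u j) (S ((μ : ℤ) + i - j)) :=
      Finset.sum_congr rfl fun j hj => by
        rw [ih j (Finset.mem_range.mp hj)
          (le_trans (le_of_lt (Finset.mem_range.mp hj)) hi)]
    rw [hutil i, hsum, key2 i hi, add_sub_cancel_left, Matrix.vecMul_vecMul,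
      Matrix.mul_nonsing_inv _ hSμ, Matrix.vecMul_one]
end
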